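/- (Inverse spectral problem for arrowhead matrices) Let k ≥ 1 and let real numbers satisfy the strict interlacing λ_0 > μ_1 > λ_1 > μ_2 > λ_2 > … > μ_k > λ_k. Then there exist a unique real number t and unique positive real numbers c_1, …, c_k such that the (k+1)×(k+1) real symmetric arrowhead matrix M defined by M_{00} = t, M_{0i} = M_{i0} = c_i and M_{ii} = μ_i for 1 ≤ i ≤ k, and M_{ij} = 0 for all other entries, has eigenvalues exactly λ_0, λ_1, …, λ_k. -/

import Mathlib

open Polynomial

/-- The `(k+1) × (k+1)` real symmetric arrowhead matrix: tip entry `t` in position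
`(0,0)`, arm entries `c₁, …, c_k` in positions `(0,i)` and `(i,0)`, diagonal entries
`μ₁, …, μ_k` in positions `(i,i)` for `1 ≤ i ≤ k`, and `0` elsewhere. -/
def arrowhead (k : ℕ) (t : ℝ) (c μ : Fin k → ℝ) :
    Matrix (Fin (k + 1)) (Fin (k + 1)) ℝ :=
  Matrix.of fun p q =>
    if hp : (p : ℕ) = 0 then
      (if hq : (q : ℕ) = 0 then t else c ⟨(q : ℕ) - 1, by have := q.isLt; omega⟩)
    else if hq2 : (q : ℕ) = 0 then c ⟨(p : ℕ) - 1, by have := p.isLt; omega⟩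
    else if hpq : p = q then μ ⟨(p : ℕ) - 1, by have := p.isLt; omega⟩
    else 0

open Matrix Finset

section
variable {k : ℕ} {t x : ℝ} {c μ : Fin k → ℝ}

lemma arrow00 : arrowhead k t c μ 0 0 = t := by simp [arrowhead]

lemma arrow0s (i : Fin k) : arrowhead k t c μ 0 i.succ = c i := by
  simp only [arrowhead, Matrix.of_apply, Fin.val_zero, Fin.val_succ]
  simp only [dite_true, dif_pos rfl]
  rw [dif_neg (by omega)]
  exact congrArg c (Fin.ext (by simp))

lemma arrows0 (i : Fin k) : arrowhead k t c μ i.succ 0 = c i := by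
  simp only [arrowhead, Matrix.of_apply, Fin.val_zero, Fin.val_succ]
  rw [dif_neg (by omega)]
  simp only [dite_true, dif_pos rfl]
  exact congrArg c (Fin.ext (by simp))

lemma arrowss (i j : Fin k) :
    arrowhead k t c μ i.succ j.succ = if i = j then μ i else 0 := by
  simp only [arrowhead, Matrix.of_apply, Fin.val_succ]
  rw [dif_neg (by omega), dif_neg (by omega)]
  rcases eq_or_ne i j with rfl | h
  · rw [if_pos rfl, dif_pos rfl]
    exact congrArg μ (Fin.ext (by simp))
  · rw [dif_neg (by simpa [Fin.succ_inj] using h), if_neg h]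

def sumEquiv (k : ℕ) : Fin 1 ⊕ Fin k ≃ Fin (k + 1) where
  toFun := Sum.elim (fun _ => 0) Fin.succ
  invFun p := if h : p = 0 then Sum.inl 0 else Sum.inr (p.pred h)
  left_inv p := by
    rcases p with u | i
    · simp [Fin.fin_one_eq_zero u]
    · simp [Fin.succ_ne_zero]
  right_inv p := by
    rcases eq_or_ne p 0 with rfl | h
    · simp
    · simp [h]

lemma det_arrow_real (hx : ∀ i, x ≠ μ i) :
    (x • (1 : Matrix (Fin (k+1)) (Fin (k+1)) ℝ) - arrowhead k t c μ).det
      = (x - t) * ∏ i, (x - μ i)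
        - ∑ i, (c i)^2 * ∏ j ∈ Finset.univ.erase i, (x - μ j) := by
  have hne : ∀ i, x - μ i ≠ 0 := fun i => sub_ne_zero.mpr (hx i)
  have hsub : (x • (1 : Matrix (Fin (k+1)) (Fin (k+1)) ℝ)
        - arrowhead k t c μ).submatrix (sumEquiv k) (sumEquiv k)
      = Matrix.fromBlocks (Matrix.of fun _ _ => x - t) (Matrix.of fun _ j => -(c j))
          (Matrix.of fun i _ => -(c i)) (Matrix.diagonal fun i => x - μ i) := by
    ext p q
    rcases p with u | i <;> rcases q with v | j <;>
      simp only [Matrix.submatrix_apply, _root_.sumEquiv, Equiv.coe_fn_mk, Sum.elim_inl, Sum.elim_inr,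
        Matrix.fromBlocks_apply₁₁, Matrix.fromBlocks_apply₁₂, Matrix.fromBlocks_apply₂₁,
        Matrix.fromBlocks_apply₂₂, Matrix.sub_apply, Matrix.smul_apply, Matrix.one_apply,
        smul_eq_mul]
    · simp [arrow00]
    · simp [arrow0s, Ne.symm (Fin.succ_ne_zero j)]
    · simp [arrows0, Fin.succ_ne_zero i]
    · rw [arrowss]
      rcases eq_or_ne i j with rfl | h
      · simp
      · simp [h, Fin.succ_inj.ne.mpr h, Matrix.diagonal_apply_ne _ h]
  have hDdet : (Matrix.diagonal fun i => x - μ i).det = ∏ i, (x - μ i) := by simp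
  haveI : Invertible (Matrix.diagonal fun i => x - μ i) :=
    Matrix.invertibleOfIsUnitDet _
      (by rw [hDdet]; exact (Finset.prod_ne_zero_iff.mpr fun i _ => hne i).isUnit)
  have hDinv : (⅟(Matrix.diagonal fun i => x - μ i) : Matrix (Fin k) (Fin k) ℝ)
      = Matrix.diagonal fun i => (x - μ i)⁻¹ := by
    refine invOf_eq_right_inv ?_
    rw [Matrix.diagonal_mul_diagonal]
    have h1 : (fun i => (x - μ i) * (x - μ i)⁻¹) = fun _ : Fin k => (1:ℝ) :=
      funext fun i => mul_inv_cancel₀ (hne i)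
    rw [h1, Matrix.diagonal_one]
  rw [← Matrix.det_submatrix_equiv_self (sumEquiv k), hsub, Matrix.det_fromBlocks₂₂, hDdet, hDinv]
  have h2 : ((Matrix.of fun _ _ => x - t : Matrix (Fin 1) (Fin 1) ℝ)
        - (Matrix.of fun _ j => -(c j) : Matrix (Fin 1) (Fin k) ℝ)
          * (Matrix.diagonal fun i => (x - μ i)⁻¹)
          * (Matrix.of fun i _ => -(c i) : Matrix (Fin k) (Fin 1) ℝ)).det
      = (x - t) - ∑ j, (c j)^2 * (x - μ j)⁻¹ := by
    rw [Matrix.det_fin_one]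
    simp only [Matrix.sub_apply, Matrix.of_apply]
    rw [Matrix.mul_apply]
    congr 1
    refine Finset.sum_congr rfl fun j _ => ?_
    rw [Matrix.mul_diagonal]
    simp only [Matrix.of_apply]
    ring
  rw [h2, mul_sub, Finset.mul_sum]
  congr 1
  · ring
  refine Finset.sum_congr rfl fun j _ => ?_
  rw [← Finset.mul_prod_erase Finset.univ _ (Finset.mem_univ j)]
  have hcancel : (x - μ j) * (x - μ j)⁻¹ = 1 := mul_inv_cancel₀ (hne j)
  linear_combination (∏ j' ∈ Finset.univ.erase j, (x - μ j')) * (c j)^2 * hcancel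

end

lemma arrowhead_charpoly (k : ℕ) (t : ℝ) (c μ : Fin k → ℝ) :
    (arrowhead k t c μ).charpoly
      = (X - C t) * ∏ i, (X - C (μ i))
        - ∑ i, C ((c i)^2) * ∏ j ∈ Finset.univ.erase i, (X - C (μ j)) := by
  apply Polynomial.eq_of_infinite_eval_eq
  apply Set.Infinite.mono _ ((Set.finite_range μ).infinite_compl)
  intro x hx
  have hx' : ∀ i, x ≠ μ i := by
    intro i h
    exact hx ⟨i, h.symm⟩
  simp only [Set.mem_setOf_eq]
  have h1 : eval x (arrowhead k t c μ).charpoly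
      = (x • (1 : Matrix (Fin (k+1)) (Fin (k+1)) ℝ) - arrowhead k t c μ).det := by
    rw [Matrix.charpoly]
    rw [show eval x (arrowhead k t c μ).charmatrix.det
        = ((evalRingHom x).mapMatrix (arrowhead k t c μ).charmatrix).det
      from RingHom.map_det (evalRingHom x) _]
    congr 1
    ext i j
    simp only [RingHom.mapMatrix_apply, Matrix.map_apply, coe_evalRingHom]
    rcases eq_or_ne i j with rfl | h
    · simp [Matrix.charmatrix_apply_eq, Matrix.one_apply]
    · simp [Matrix.charmatrix_apply_ne _ _ _ h, Matrix.one_apply_ne h]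
  rw [h1, det_arrow_real hx']
  simp [eval_finset_sum, eval_prod]

lemma prod_neg_sign {ι : Type*} (s : Finset ι) (f : ι → ℝ) :
    ∏ i ∈ s, (-f i) = (-1) ^ s.card * ∏ i ∈ s, f i := by
  rw [← Finset.prod_const, ← Finset.prod_mul_distrib]
  simp [neg_one_mul]

section
variable {k : ℕ} (lam : Fin (k + 1) → ℝ) (μ : Fin k → ℝ)
variable (hinterlace : ∀ i : Fin k, lam i.castSucc > μ i ∧ μ i > lam i.succ)
include hinterlace

lemma lamA : StrictAnti lam :=
  Fin.strictAnti_iff_succ_lt.mpr fun i => (hinterlace i).2.trans (hinterlace i).1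

lemma muA : StrictAnti μ := by
  intro i j hij
  have h1 : μ j < lam j.castSucc := (hinterlace j).1
  have h2 : lam j.castSucc ≤ lam i.succ :=
    (lamA lam μ hinterlace).antitone (by
      rw [Fin.le_def]
      have := Fin.lt_def.mp hij
      simp only [Fin.val_succ, Fin.coe_castSucc]
      omega)
  have h3 : lam i.succ < μ i := (hinterlace i).2
  linarith

lemma Dnz (i : Fin k) : ∏ j ∈ Finset.univ.erase i, (μ i - μ j) ≠ 0 := by
  refine Finset.prod_ne_zero_iff.mpr fun j hj => sub_ne_zero.mpr ?_
  exact fun h => (Finset.mem_erase.mp hj).1 ((muA lam μ hinterlace).injective h).symm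

lemma signPD (i : Fin k) :
    eval (μ i) (∏ m, (X - C (lam m))) * ∏ j ∈ Finset.univ.erase i, (μ i - μ j) < 0 := by
  have lama := lamA lam μ hinterlace
  have mua := muA lam μ hinterlace
  have hP : eval (μ i) (∏ m, (X - C (lam m))) = ∏ m, (μ i - lam m) := by
    simp [eval_prod]
  -- numerator
  have hsplitN : ∏ m, (μ i - lam m)
      = (∏ m ∈ Finset.Iio i.succ, (μ i - lam m)) * ∏ m ∈ (Finset.Iio i.succ)ᶜ, (μ i - lam m) :=
    (Finset.prod_mul_prod_compl _ _).symm
  have hN1 : ∏ m ∈ Finset.Iio i.succ, (μ i - lam m)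
      = (-1) ^ ((i : ℕ) + 1) * ∏ m ∈ Finset.Iio i.succ, (lam m - μ i) := by
    calc ∏ m ∈ Finset.Iio i.succ, (μ i - lam m)
        = ∏ m ∈ Finset.Iio i.succ, -(lam m - μ i) := by
          refine Finset.prod_congr rfl fun m _ => by ring
      _ = (-1) ^ (Finset.Iio i.succ).card * ∏ m ∈ Finset.Iio i.succ, (lam m - μ i) :=
          prod_neg_sign _ _
      _ = (-1) ^ ((i : ℕ) + 1) * ∏ m ∈ Finset.Iio i.succ, (lam m - μ i) := by
          rw [Fin.card_Iio]; rfl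
  have hApos : 0 < ∏ m ∈ Finset.Iio i.succ, (lam m - μ i) := by
    refine Finset.prod_pos fun m hm => ?_
    rw [Finset.mem_Iio] at hm
    have hm' : m ≤ i.castSucc := by
      simp [Fin.lt_def, Fin.le_def] at hm ⊢; omega
    have := lama.antitone hm'
    have := (hinterlace i).1
    linarith
  have hBpos : 0 < ∏ m ∈ (Finset.Iio i.succ)ᶜ, (μ i - lam m) := by
    refine Finset.prod_pos fun m hm => ?_
    rw [Finset.mem_compl, Finset.mem_Iio] at hm
    have hm' : i.succ ≤ m := not_lt.mp hm
    have := lama.antitone hm'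
    have := (hinterlace i).2
    linarith
  -- denominator
  have hsplitD : ∏ j ∈ Finset.univ.erase i, (μ i - μ j)
      = (∏ j ∈ (Finset.univ.erase i).filter (· < i), (μ i - μ j))
        * ∏ j ∈ (Finset.univ.erase i).filter (¬ · < i), (μ i - μ j) :=
    (Finset.prod_filter_mul_prod_filter_not _ _ _).symm
  have hfilter : (Finset.univ.erase i).filter (· < i) = Finset.Iio i := by
    ext j
    constructor
    · intro hj; exact Finset.mem_Iio.mpr (by simpa using (Finset.mem_filter.mp hj).2)
    · intro hj
      have h := Finset.mem_Iio.mp hj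
      exact Finset.mem_filter.mpr ⟨Finset.mem_erase.mpr ⟨h.ne, Finset.mem_univ j⟩, by simpa using h⟩
  have hD1 : ∏ j ∈ (Finset.univ.erase i).filter (· < i), (μ i - μ j)
      = (-1) ^ (i : ℕ) * ∏ j ∈ Finset.Iio i, (μ j - μ i) := by
    rw [hfilter]
    calc ∏ j ∈ Finset.Iio i, (μ i - μ j)
        = ∏ j ∈ Finset.Iio i, -(μ j - μ i) := Finset.prod_congr rfl fun m _ => by ring
      _ = (-1) ^ (Finset.Iio i).card * ∏ j ∈ Finset.Iio i, (μ j - μ i) := prod_neg_sign _ _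
      _ = _ := by rw [Fin.card_Iio]
  have hCpos : 0 < ∏ j ∈ Finset.Iio i, (μ j - μ i) := by
    refine Finset.prod_pos fun j hj => ?_
    rw [Finset.mem_Iio] at hj
    have := mua hj
    linarith
  have hEpos : 0 < ∏ j ∈ (Finset.univ.erase i).filter (¬ · < i), (μ i - μ j) := by
    refine Finset.prod_pos fun j hj => ?_
    rw [Finset.mem_filter, Finset.mem_erase] at hj
    have hij : i < j := lt_of_le_of_ne (not_lt.mp hj.2) (Ne.symm hj.1.1)
    have := mua hij
    linarith
  have hsign : ((-1 : ℝ)) ^ ((i : ℕ) + 1) * (-1) ^ (i : ℕ) = -1 := by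
    rw [← pow_add]
    exact Odd.neg_one_pow ⟨(i : ℕ), by ring⟩
  rw [hP, hsplitN, hN1, hsplitD, hD1]
  nlinarith [mul_pos hApos hBpos, mul_pos hCpos hEpos,
    mul_pos (mul_pos hApos hBpos) (mul_pos hCpos hEpos)]
end


section
variable {k : ℕ} (lam : Fin (k + 1) → ℝ) (μ : Fin k → ℝ)

lemma hQd : (∏ i, (X - C (μ i)) : ℝ[X]).natDegree = k := by
  rw [Polynomial.natDegree_prod _ _ fun i _ => X_sub_C_ne_zero (μ i)]
  simp

lemma hPd : (∏ i, (X - C (lam i)) : ℝ[X]).natDegree = k + 1 := by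
  rw [Polynomial.natDegree_prod _ _ fun i _ => X_sub_C_ne_zero (lam i)]
  simp

lemma hQe_deg (i : Fin k) :
    (∏ j ∈ Finset.univ.erase i, (X - C (μ j)) : ℝ[X]).natDegree ≤ k - 1 := by
  refine le_trans (Polynomial.natDegree_prod_le _ _) ?_
  simp [Finset.card_erase_of_mem]

lemma hsum_coeff (v : Fin k → ℝ) {n : ℕ} (hk : 1 ≤ k) (hn : k ≤ n) :
    (∑ i, C (v i) * ∏ j ∈ Finset.univ.erase i, (X - C (μ j)) : ℝ[X]).coeff n = 0 := by
  rw [Polynomial.finset_sum_coeff]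
  refine Finset.sum_eq_zero fun i _ => ?_
  have h1 := Polynomial.natDegree_mul_le (p := C (v i))
    (q := ∏ j ∈ Finset.univ.erase i, (X - C (μ j)))
  have h2 := hQe_deg μ i
  have h3 : (C (v i)).natDegree = 0 := natDegree_C _
  refine Polynomial.coeff_eq_zero_of_natDegree_lt ?_
  omega

lemma hXQ_coeff_top (t : ℝ) :
    ((X - C t) * ∏ i, (X - C (μ i)) : ℝ[X]).coeff (k + 1) = 1 := by
  have hm : ((X - C t) * ∏ i, (X - C (μ i)) : ℝ[X]).Monic :=
    (monic_X_sub_C t).mul (monic_prod_of_monic _ _ fun i _ => monic_X_sub_C _)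
  have hd : ((X - C t) * ∏ i, (X - C (μ i)) : ℝ[X]).natDegree = k + 1 := by
    rw [Polynomial.natDegree_mul (X_sub_C_ne_zero t)
      (monic_prod_of_monic _ _ fun i _ => monic_X_sub_C _).ne_zero, natDegree_X_sub_C, hQd]
    omega
  have h := hm.coeff_natDegree
  rwa [hd] at h

lemma hXQ_deg (t : ℝ) :
    ((X - C t) * ∏ i, (X - C (μ i)) : ℝ[X]).natDegree = k + 1 := by
  rw [Polynomial.natDegree_mul (X_sub_C_ne_zero t)
    (monic_prod_of_monic _ _ fun i _ => monic_X_sub_C _).ne_zero, natDegree_X_sub_C, hQd]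
  omega

lemma hP_coeff_top : (∏ i, (X - C (lam i)) : ℝ[X]).coeff (k + 1) = 1 := by
  have hm : (∏ i, (X - C (lam i)) : ℝ[X]).Monic :=
    monic_prod_of_monic _ _ fun i _ => monic_X_sub_C _
  have h := hm.coeff_natDegree
  rwa [hPd] at h

lemma hQ_coeff_k (hk : 1 ≤ k) : (∏ i, (X - C (μ i)) : ℝ[X]).coeff (k - 1) = -∑ i, μ i := by
  have h1 := Polynomial.prod_X_sub_C_nextCoeff (s := Finset.univ) μ
  rw [nextCoeff_of_natDegree_pos (by rw [hQd]; omega), hQd] at h1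
  simpa using h1

lemma hP_coeff_k : (∏ i, (X - C (lam i)) : ℝ[X]).coeff k = -∑ i, lam i := by
  have h1 := Polynomial.prod_X_sub_C_nextCoeff (s := Finset.univ) lam
  rw [nextCoeff_of_natDegree_pos (by rw [hPd]; omega), hPd] at h1
  simpa using h1

lemma hXQ_coeff_k (hk : 1 ≤ k) (t : ℝ) :
    ((X - C t) * ∏ i, (X - C (μ i)) : ℝ[X]).coeff k = -(∑ i, μ i) - t := by
  obtain ⟨k', rfl⟩ : ∃ k', k = k' + 1 := ⟨k - 1, by omega⟩
  have hQm : (∏ i, (X - C (μ i)) : ℝ[X]).Monic :=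
    monic_prod_of_monic _ _ fun i _ => monic_X_sub_C _
  rw [sub_mul, Polynomial.coeff_sub, Polynomial.coeff_X_mul, Polynomial.coeff_C_mul]
  have h1 := hQ_coeff_k μ hk
  rw [Nat.add_sub_cancel] at h1
  have h2 : (∏ i, (X - C (μ i)) : ℝ[X]).coeff (k' + 1) = 1 := by
    have h := hQm.coeff_natDegree
    rwa [hQd] at h
  rw [h1, h2]
  ring

-- evaluation lemmas
lemma hevalQ (i : Fin k) : eval (μ i) (∏ j, (X - C (μ j)) : ℝ[X]) = 0 := by
  rw [eval_prod]
  exact Finset.prod_eq_zero (Finset.mem_univ i) (by simp)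

lemma hevalQe_ne {i j : Fin k} (h : i ≠ j) :
    eval (μ i) (∏ m ∈ Finset.univ.erase j, (X - C (μ m)) : ℝ[X]) = 0 := by
  rw [eval_prod]
  exact Finset.prod_eq_zero (Finset.mem_erase.mpr ⟨h, Finset.mem_univ i⟩) (by simp)

lemma hevalQe (i : Fin k) :
    eval (μ i) (∏ m ∈ Finset.univ.erase i, (X - C (μ m)) : ℝ[X])
      = ∏ m ∈ Finset.univ.erase i, (μ i - μ m) := by
  simp [eval_prod]

-- extraction lemma
lemma extract (hk : 1 ≤ k) (t : ℝ) (v : Fin k → ℝ)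
    (heq : (X - C t) * ∏ i, (X - C (μ i))
      - ∑ i, C (v i) * ∏ j ∈ Finset.univ.erase i, (X - C (μ j)) = ∏ i, (X - C (lam i))) :
    t = ∑ i, lam i - ∑ i, μ i ∧
    ∀ i : Fin k, v i * ∏ j ∈ Finset.univ.erase i, (μ i - μ j)
      = -(eval (μ i) (∏ m, (X - C (lam m)))) := by
  constructor
  · have hc := congrArg (fun p : ℝ[X] => p.coeff k) heq
    simp only [Polynomial.coeff_sub] at hc
    rw [hXQ_coeff_k μ hk t, hsum_coeff μ v hk le_rfl, hP_coeff_k lam] at hc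
    linarith
  · intro i
    have hc := congrArg (eval (μ i)) heq
    simp only [eval_sub, eval_mul, eval_finset_sum, eval_C] at hc
    rw [hevalQ μ i] at hc
    have hsum : ∑ j, v j * eval (μ i) (∏ m ∈ Finset.univ.erase j, (X - C (μ m)))
        = v i * ∏ m ∈ Finset.univ.erase i, (μ i - μ m) := by
      rw [Finset.sum_eq_single i]
      · rw [hevalQe]
      · intro j _ hj
        rw [hevalQe_ne μ (Ne.symm hj), mul_zero]
      · intro h; exact absurd (Finset.mem_univ i) h
    rw [hsum] at hc
    linarith

lemma heval_sum (v : Fin k → ℝ) (i : Fin k) :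
    eval (μ i) (∑ j, C (v j) * ∏ m ∈ Finset.univ.erase j, (X - C (μ m)) : ℝ[X])
      = v i * ∏ m ∈ Finset.univ.erase i, (μ i - μ m) := by
  rw [eval_finset_sum]
  rw [Finset.sum_eq_single i]
  · rw [eval_mul, eval_C, hevalQe μ]
  · intro j _ hj
    rw [eval_mul, eval_C, hevalQe_ne μ (Ne.symm hj), mul_zero]
  · intro h; exact absurd (Finset.mem_univ i) h

lemma main_identity (hk : 1 ≤ k)
    (hD : ∀ i, ∏ j ∈ Finset.univ.erase i, (μ i - μ j) ≠ 0)
    (hInj : Function.Injective μ) :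
    (X - C (∑ i, lam i - ∑ i, μ i)) * ∏ i, (X - C (μ i))
      - ∑ i, C (-(eval (μ i) (∏ m, (X - C (lam m))))
            / ∏ j ∈ Finset.univ.erase i, (μ i - μ j))
          * ∏ j ∈ Finset.univ.erase i, (X - C (μ j))
      = ∏ m, (X - C (lam m)) := by
  set t0 : ℝ := ∑ i, lam i - ∑ i, μ i with ht0
  set w : Fin k → ℝ := fun i => -(eval (μ i) (∏ m, (X - C (lam m))))
      / ∏ j ∈ Finset.univ.erase i, (μ i - μ j) with hw
  rw [← sub_eq_zero]
  set E : ℝ[X] := (X - C t0) * ∏ i, (X - C (μ i))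
      - (∑ i, C (w i) * ∏ j ∈ Finset.univ.erase i, (X - C (μ j)))
      - ∏ m, (X - C (lam m)) with hE
  have hcoeff : ∀ m : ℕ, k ≤ m → E.coeff m = 0 := by
    intro m hm
    rw [hE, Polynomial.coeff_sub, Polynomial.coeff_sub]
    rcases show m = k ∨ m = k + 1 ∨ k + 2 ≤ m by omega with rfl | rfl | h2
    · rw [hXQ_coeff_k μ hk t0, hsum_coeff μ w hk le_rfl, hP_coeff_k lam, ht0]
      ring
    · rw [hXQ_coeff_top μ t0, hsum_coeff μ w hk (by omega), hP_coeff_top lam]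
      ring
    · rw [hsum_coeff μ w hk (by omega),
        Polynomial.coeff_eq_zero_of_natDegree_lt (by rw [hXQ_deg μ t0]; omega),
        Polynomial.coeff_eq_zero_of_natDegree_lt (by rw [hPd lam]; omega)]
      ring
  have heval : ∀ i : Fin k, E.eval (μ i) = 0 := by
    intro i
    rw [hE]
    simp only [eval_sub, eval_mul]
    rw [hevalQ μ i, heval_sum μ w i, mul_zero]
    have : w i * ∏ m ∈ Finset.univ.erase i, (μ i - μ m)
        = -(eval (μ i) (∏ m, (X - C (lam m)))) := by
      rw [hw]
      exact div_mul_cancel₀ _ (hD i)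
    rw [this]
    ring
  have hdeg : E.natDegree < Fintype.card (Fin k) := by
    rw [Fintype.card_fin]
    by_cases hE0 : E = 0
    · rw [hE0]; simpa using (show 0 < k by omega)
    · rw [Polynomial.natDegree_lt_iff_degree_lt hE0]
      exact (Polynomial.degree_lt_iff_coeff_zero E k).mpr
        fun m hm => hcoeff m (by exact_mod_cast hm)
  exact Polynomial.eq_zero_of_natDegree_lt_card_of_eval_eq_zero E hInj heval hdeg

end

/-- Inverse spectral problem for arrowhead matrices: given strictly interlacing data
`λ₀ > μ₁ > λ₁ > … > μ_k > λ_k`, there are a unique `t ∈ ℝ` and unique positive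
`c₁, …, c_k` such that the arrowhead matrix with tip `t`, arms `cᵢ` and diagonal `μᵢ`
has characteristic polynomial `∏ᵢ (x - λᵢ)`. -/
theorem arrowhead_inverse_spectral (k : ℕ) (hk : 1 ≤ k)
    (lam : Fin (k + 1) → ℝ) (μ : Fin k → ℝ)
    (hinterlace : ∀ i : Fin k, lam i.castSucc > μ i ∧ μ i > lam i.succ) :
    ∃! tc : ℝ × (Fin k → ℝ),
      (∀ i, 0 < tc.2 i) ∧
      (arrowhead k tc.1 tc.2 μ).charpoly = ∏ i, (X - C (lam i)) := by
  classical
  have hD : ∀ i : Fin k, ∏ j ∈ Finset.univ.erase i, (μ i - μ j) ≠ 0 := Dnz lam μ hinterlace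
  have hInj : Function.Injective μ := (muA lam μ hinterlace).injective
  set t0 : ℝ := ∑ i, lam i - ∑ i, μ i with ht0
  set w : Fin k → ℝ := fun i => -(eval (μ i) (∏ m, (X - C (lam m))))
      / ∏ j ∈ Finset.univ.erase i, (μ i - μ j) with hw
  have hwpos : ∀ i, 0 < w i := by
    intro i
    have hs := signPD lam μ hinterlace i
    have hD1 := hD i
    have hD2 : (0:ℝ) < (∏ j ∈ Finset.univ.erase i, (μ i - μ j))^2 := by positivity
    have hrw : w i = -(eval (μ i) (∏ m, (X - C (lam m)))
        * ∏ j ∈ Finset.univ.erase i, (μ i - μ j)) / (∏ j ∈ Finset.univ.erase i, (μ i - μ j))^2 := by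
      rw [hw]
      field_simp
    rw [hrw]
    exact div_pos (by linarith) hD2
  refine ⟨(t0, fun i => Real.sqrt (w i)), ⟨fun i => Real.sqrt_pos.mpr (hwpos i), ?_⟩, ?_⟩
  · rw [arrowhead_charpoly]
    have hrw : ∑ i, C ((Real.sqrt (w i))^2) * ∏ j ∈ Finset.univ.erase i, (X - C (μ j))
        = ∑ i, C (w i) * ∏ j ∈ Finset.univ.erase i, (X - C (μ j)) :=
      Finset.sum_congr rfl fun i _ => by rw [Real.sq_sqrt (hwpos i).le]
    rw [hrw]
    exact main_identity lam μ hk hD hInj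
  · rintro ⟨t, c⟩ ⟨hpos, hcp⟩
    rw [arrowhead_charpoly] at hcp
    obtain ⟨ht, hc⟩ := extract lam μ hk t (fun i => (c i)^2) hcp
    have hceq : ∀ i, c i = Real.sqrt (w i) := by
      intro i
      have h1 : (c i)^2 = w i := by
        have h2 := hc i
        rw [hw]
        rw [eq_div_iff (hD i)]
        exact h2
      rw [← h1, Real.sqrt_sq (hpos i).le]
    exact Prod.ext ht (funext hceq)
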